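/- arXiv:2108.03752 — 3 statements merged into one kernel-verified Lean document; each statement's English description precedes it below -/
import Mathlib

section
/- Let n ≥ 5 and let ã be the element (f, 1) of W = S_n ≀ S_n whose base component f has the transposition (0 1) in its first two coordinates and the identity in all other coordinates. Then the normal closure of ã in W equals the subgroup e ≀ Ã_n = {(f, 1) : ∏ i, sign (f i) = 1}. -/
/-- The automorphism of `Fin n → G` permuting coordinates by `σ`:
`(σ • f) i = f (σ⁻¹ i)`. -/
def permAut {n : ℕ} {G : Type*} [Group G] (σ : Equiv.Perm (Fin n)) :
    MulAut (Fin n → G) where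
  toFun f i := f (σ⁻¹ i)
  invFun f i := f (σ i)
  left_inv f := funext fun i => by simp
  right_inv f := funext fun i => by simp
  map_mul' f g := rfl

/-- The action of `Equiv.Perm (Fin n)` on `Fin n → G` by permuting coordinates,
as a homomorphism into the automorphism group. -/
def permHom (n : ℕ) (G : Type*) [Group G] :
    Equiv.Perm (Fin n) →* MulAut (Fin n → G) where
  toFun := permAut
  map_one' := rfl
  map_mul' _ _ := rfl

/-- The permutational wreath product `S_n ≀ S_m`, realized as the semidirect
product `(Fin n → Equiv.Perm (Fin m)) ⋊ Equiv.Perm (Fin n)`. -/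
abbrev W (n m : ℕ) : Type :=
  SemidirectProduct (Fin n → Equiv.Perm (Fin m)) (Equiv.Perm (Fin n))
    (permHom n (Equiv.Perm (Fin m)))

namespace Stmt1Aux

open Equiv SemidirectProduct

variable {n : ℕ}

@[simp] lemma permHom_apply {G : Type*} [Group G] (σ : Equiv.Perm (Fin n))
    (f : Fin n → G) (i : Fin n) :
    (permHom n G σ) f i = f (σ⁻¹ i) := rfl

/-- The product-of-signs homomorphism `W n n →* ℤˣ`. -/
def signW (n : ℕ) : W n n →* ℤˣ where
  toFun w := ∏ i, Equiv.Perm.sign (w.left i)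
  map_one' := by simp [SemidirectProduct.one_left]
  map_mul' x y := by
    show ∏ i, Equiv.Perm.sign ((x * y).left i) = _
    simp only [mul_left, Pi.mul_apply, permHom_apply, map_mul, Finset.prod_mul_distrib]
    congr 1
    exact Equiv.prod_comp x.right⁻¹ fun i => Equiv.Perm.sign (y.left i)

/-- The generator `ã`. -/
def atilde (a b : Fin n) : W n n :=
  inl (fun i => if i = a ∨ i = b then Equiv.swap a b else 1)

/-- A permutation sending `a` to `x` and `b` to `y`. -/
def toPair (a b x y : Fin n) : Equiv.Perm (Fin n) :=
  Equiv.swap (Equiv.swap a x b) y * Equiv.swap a x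

lemma toPair_fst {a b x y : Fin n} (hab : a ≠ b) (hxy : x ≠ y) : toPair a b x y a = x := by
  have h1 : Equiv.swap a x b ≠ x := by
    intro h
    exact hab ((Equiv.swap a x).injective (h.trans (Equiv.swap_apply_left a x).symm)).symm
  show (Equiv.swap (Equiv.swap a x b) y) ((Equiv.swap a x) a) = x
  rw [Equiv.swap_apply_left, Equiv.swap_apply_of_ne_of_ne (Ne.symm h1) hxy]

lemma toPair_snd {a b x y : Fin n} : toPair a b x y b = y := by
  show (Equiv.swap (Equiv.swap a x b) y) ((Equiv.swap a x) b) = y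
  exact Equiv.swap_apply_left _ _

lemma conj_mem (a b : Fin n) (g : Fin n → Equiv.Perm (Fin n)) (σ : Equiv.Perm (Fin n)) :
    inl (fun i => g i * (if σ⁻¹ i = a ∨ σ⁻¹ i = b then Equiv.swap a b else 1) * (g i)⁻¹)
      ∈ Subgroup.normalClosure {atilde a b} := by
  have h1 : atilde a b ∈ Subgroup.normalClosure {atilde a b} :=
    Subgroup.subset_normalClosure rfl
  have h2 := (Subgroup.normalClosure_normal (s := {atilde a b})).conj_mem _ h1 (inl g * inr σ)
  have key : (inl g * inr σ) * atilde a b * (inl g * inr σ)⁻¹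
      = inl (fun i => g i * (if σ⁻¹ i = a ∨ σ⁻¹ i = b then Equiv.swap a b else 1) * (g i)⁻¹) := by
    refine SemidirectProduct.ext ?_ ?_
    · funext i
      simp [atilde, mul_left, mul_right, inv_left, inv_right, mul_assoc]
    · simp [atilde, mul_left, mul_right, inv_left, inv_right]
  rwa [key] at h2

lemma pair_mem (a b : Fin n) (hab : a ≠ b) {i j x y z w : Fin n}
    (hij : i ≠ j) (hxy : x ≠ y) (hzw : z ≠ w) :
    inl (fun k => if k = i then Equiv.swap x y else if k = j then Equiv.swap z w else 1)
      ∈ Subgroup.normalClosure {atilde a b} := by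
  have h := conj_mem a b
    (fun k => if k = i then toPair a b x y else if k = j then toPair a b z w else 1)
    (toPair a b i j)
  have hi : (toPair a b i j)⁻¹ i = a := by
    rw [Equiv.Perm.inv_eq_iff_eq, toPair_fst hab hij]
  have hj : (toPair a b i j)⁻¹ j = b := by
    rw [Equiv.Perm.inv_eq_iff_eq, toPair_snd]
  have e : (fun k => (if k = i then toPair a b x y else if k = j then toPair a b z w else 1) *
        (if (toPair a b i j)⁻¹ k = a ∨ (toPair a b i j)⁻¹ k = b then Equiv.swap a b else 1) *
        (if k = i then toPair a b x y else if k = j then toPair a b z w else 1)⁻¹)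
      = (fun k => if k = i then Equiv.swap x y else if k = j then Equiv.swap z w else 1) := by
    funext k
    have hcond : ((toPair a b i j)⁻¹ k = a ∨ (toPair a b i j)⁻¹ k = b) ↔ (k = i ∨ k = j) := by
      rw [Equiv.Perm.inv_eq_iff_eq, Equiv.Perm.inv_eq_iff_eq, toPair_fst hab hij, toPair_snd]
    by_cases hki : k = i
    · subst hki
      rw [if_pos rfl, if_pos rfl, if_pos (hcond.mpr (Or.inl rfl)),
        ← Equiv.swap_apply_apply, toPair_fst hab hxy, toPair_snd]
    · by_cases hkj : k = j
      · rw [if_neg hki, if_pos hkj, if_pos (hcond.mpr (Or.inr hkj)),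
          ← Equiv.swap_apply_apply, toPair_fst hab hzw, toPair_snd, if_neg hki, if_pos hkj]
      · have : ¬ ((toPair a b i j)⁻¹ k = a ∨ (toPair a b i j)⁻¹ k = b) := by
          rw [hcond]; tauto
        rw [if_neg hki, if_neg hkj, if_neg this, if_neg hki, if_neg hkj]
        simp
  rwa [e] at h

lemma single_pair_mem (a b : Fin n) (hab : a ≠ b) (i : Fin n) {τ τ' : Equiv.Perm (Fin n)}
    (hτ : τ.IsSwap) (hτ' : τ'.IsSwap) :
    inl (Pi.mulSingle i (τ * τ')) ∈ Subgroup.normalClosure {atilde a b} := by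
  obtain ⟨x, y, hxy, rfl⟩ := hτ
  obtain ⟨z, w, hzw, rfl⟩ := hτ'
  set j : Fin n := if i = a then b else a with hjdef
  have hij : i ≠ j := by
    by_cases h : i = a
    · simpa [hjdef, h] using hab
    · simpa [hjdef, h] using h
  set f1 : Fin n → Equiv.Perm (Fin n) :=
    fun k => if k = i then Equiv.swap x y else if k = j then Equiv.swap a b else 1 with hf1
  set f2 : Fin n → Equiv.Perm (Fin n) :=
    fun k => if k = i then Equiv.swap z w else if k = j then Equiv.swap a b else 1 with hf2
  have h1 : inl f1 ∈ Subgroup.normalClosure {atilde a b} := pair_mem a b hab hij hxy hab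
  have h2 : inl f2 ∈ Subgroup.normalClosure {atilde a b} := pair_mem a b hab hij hzw hab
  have h3 := Subgroup.mul_mem _ h1 h2
  rw [← map_mul] at h3
  have e : f1 * f2 = Pi.mulSingle i (Equiv.swap x y * Equiv.swap z w) := by
    rw [hf1, hf2]
    funext k
    by_cases hki : k = i
    · subst hki
      simp [Pi.mul_apply]
    · by_cases hkj : k = j
      · simp [Pi.mul_apply, if_neg hki, Pi.mulSingle_eq_of_ne hki, if_pos hkj]
      · simp [Pi.mul_apply, if_neg hki, if_neg hkj, Pi.mulSingle_eq_of_ne hki]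
  rwa [e] at h3

lemma list_mem (a b : Fin n) (hab : a ≠ b) (i : Fin n) :
    ∀ l : List (Equiv.Perm (Fin n)), (∀ g ∈ l, g.IsSwap) → Even l.length →
      inl (Pi.mulSingle i l.prod) ∈ Subgroup.normalClosure {atilde a b}
  | [] => by
      intro _ _
      simp only [List.prod_nil, Pi.mulSingle_one, map_one]
      exact one_mem _
  | [τ] => by
      intro _ h
      simp at h
  | τ :: τ' :: rest => by
      intro hsw hev
      have hrest : Even rest.length := by
        obtain ⟨k, hk⟩ := hev
        exact ⟨k - 1, by simp at hk; omega⟩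
      have e : Pi.mulSingle i ((τ :: τ' :: rest).prod)
          = (Pi.mulSingle i (τ * τ') : Fin n → Equiv.Perm (Fin n)) * Pi.mulSingle i rest.prod := by
        rw [List.prod_cons, List.prod_cons, ← mul_assoc,
          Pi.mulSingle_mul (f := fun _ : Fin n => Equiv.Perm (Fin n)) i (τ * τ') rest.prod]
      rw [e, map_mul]
      exact Subgroup.mul_mem _
        (single_pair_mem a b hab i (hsw τ (by simp)) (hsw τ' (by simp)))
        (list_mem a b hab i rest (fun g hg => hsw g (by simp [hg])) hrest)

lemma set_mem (a b : Fin n) (hab : a ≠ b) :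
    ∀ S : Finset (Fin n), Even S.card →
      inl (fun k => if k ∈ S then Equiv.swap a b else 1)
        ∈ Subgroup.normalClosure {atilde a b} := by
  classical
  intro S
  induction S using Finset.strongInduction with
  | _ S ih =>
    intro hS
    rcases Finset.eq_empty_or_nonempty S with h | ⟨i, hi⟩
    · subst h
      have : (fun k : Fin n => if k ∈ (∅ : Finset (Fin n)) then Equiv.swap a b else 1)
          = (1 : Fin n → Equiv.Perm (Fin n)) := by
        funext k; simp
      rw [this, map_one]
      exact one_mem _
    · have hcard : 2 ≤ S.card := by
        rcases hS with ⟨k, hk⟩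
        have : 1 ≤ S.card := Finset.card_pos.mpr ⟨i, hi⟩
        omega
      have herase : ((S.erase i)).Nonempty := by
        rw [← Finset.card_pos, Finset.card_erase_of_mem hi]
        omega
      obtain ⟨j, hj⟩ := herase
      have hji : j ≠ i := Finset.ne_of_mem_erase hj
      have hjS : j ∈ S := Finset.mem_of_mem_erase hj
      set S' : Finset (Fin n) := (S.erase i).erase j with hS'
      have hsub : S' ⊆ S := (Finset.erase_subset _ _).trans (Finset.erase_subset _ _)
      have hiS' : i ∉ S' := fun h =>
        Finset.notMem_erase i S (Finset.mem_of_mem_erase h)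
      have hjS' : j ∉ S' := Finset.notMem_erase _ _
      have hssub : S' ⊂ S := (Finset.ssubset_iff_of_subset hsub).mpr ⟨i, hi, hiS'⟩
      have hcard' : Even S'.card := by
        have hc : S'.card = S.card - 2 := by
          rw [hS', Finset.card_erase_of_mem hj, Finset.card_erase_of_mem hi]
          omega
        rcases hS with ⟨k, hk⟩
        exact ⟨k - 1, by omega⟩
      set f1 : Fin n → Equiv.Perm (Fin n) :=
        fun k => if k = i then Equiv.swap a b else if k = j then Equiv.swap a b else 1 with hf1
      set f2 : Fin n → Equiv.Perm (Fin n) :=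
        fun k => if k ∈ S' then Equiv.swap a b else 1 with hf2
      have h1 : inl f1 ∈ Subgroup.normalClosure {atilde a b} :=
        pair_mem a b hab hji.symm hab hab
      have h2 : inl f2 ∈ Subgroup.normalClosure {atilde a b} := ih S' hssub hcard'
      have h3 := Subgroup.mul_mem _ h1 h2
      rw [← map_mul] at h3
      have e : f1 * f2 = fun k => if k ∈ S then Equiv.swap a b else 1 := by
        funext k
        by_cases hki : k = i
        · subst hki
          simp [hf1, hf2, Pi.mul_apply, hiS', hi]
        · by_cases hkj : k = j
          · subst hkj
            simp [hf1, hf2, Pi.mul_apply, hki, hjS', hjS]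
          · have hmem : k ∈ S' ↔ k ∈ S := by
              rw [hS', Finset.mem_erase, Finset.mem_erase]
              tauto
            simp [hf1, hf2, Pi.mul_apply, hki, hkj, hmem]
      rwa [e] at h3

lemma main_mem (a b : Fin n) (hab : a ≠ b) (f : Fin n → Equiv.Perm (Fin n))
    (hf : ∏ i, Equiv.Perm.sign (f i) = 1) :
    inl f ∈ Subgroup.normalClosure {atilde a b} := by
  classical
  set S : Finset (Fin n) := Finset.univ.filter (fun i => Equiv.Perm.sign (f i) ≠ 1) with hSdef
  set d : Fin n → Equiv.Perm (Fin n) := fun k => if k ∈ S then Equiv.swap a b else 1 with hd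
  have hsign : ∀ i ∈ S, Equiv.Perm.sign (f i) = -1 := by
    intro i hiS
    rcases Int.units_eq_one_or (Equiv.Perm.sign (f i)) with h | h
    · exact absurd h (by simpa [hSdef] using hiS)
    · exact h
  have hEven : Even S.card := by
    have hsplit := Finset.prod_filter_mul_prod_filter_not Finset.univ
      (fun i => Equiv.Perm.sign (f i) ≠ 1) (fun i => Equiv.Perm.sign (f i))
    rw [hf] at hsplit
    have h1 : ∏ i ∈ S, Equiv.Perm.sign (f i) = (-1 : ℤˣ) ^ S.card := by
      rw [Finset.prod_congr rfl hsign, Finset.prod_const]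
    have h2 : ∏ i ∈ Finset.univ.filter (fun i => ¬ Equiv.Perm.sign (f i) ≠ 1),
        Equiv.Perm.sign (f i) = 1 := by
      apply Finset.prod_eq_one
      intro i hiX
      simpa using (Finset.mem_filter.mp hiX).2
    rw [← hSdef] at hsplit
    rw [h1, h2, mul_one] at hsplit
    exact (neg_one_pow_eq_one_iff_even (by decide)).mp hsplit
  have hdmem : inl d ∈ Subgroup.normalClosure {atilde a b} := set_mem a b hab S hEven
  set g : Fin n → Equiv.Perm (Fin n) := fun i => f i * (d i)⁻¹ with hg
  have hgsign : ∀ i, Equiv.Perm.sign (g i) = 1 := by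
    intro i
    by_cases h : Equiv.Perm.sign (f i) = 1
    · have hiS : i ∉ S := by simp [hSdef, h]
      simp [hg, hd, hiS, h]
    · have hiS : i ∈ S := by simp [hSdef, h]
      simp [hg, hd, hiS, hsign i hiS, Equiv.Perm.sign_swap hab]
  have hfactor : f = g * d := by
    funext i
    simp [hg, Pi.mul_apply]
  rw [hfactor, map_mul]
  refine Subgroup.mul_mem _ ?_ hdmem
  rw [← Finset.noncommProd_mulSingle g]
  erw [Finset.map_noncommProd]
  refine Subgroup.noncommProd_mem _ _ fun i _ => ?_
  obtain ⟨l, hlp, hls⟩ := (Equiv.Perm.truncSwapFactors (g i)).out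
  have hlen : Even l.length := by
    have hh := Equiv.Perm.sign_prod_list_swap hls
    rw [hlp, hgsign i] at hh
    exact (neg_one_pow_eq_one_iff_even (by decide)).mp hh.symm
  rw [← hlp]
  exact list_mem a b hab i l hls hlen

lemma signW_atilde (a b : Fin n) (hab : a ≠ b) : signW n (atilde a b) = 1 := by
  show ∏ i, Equiv.Perm.sign (if i = a ∨ i = b then Equiv.swap a b else 1) = 1
  have h : ∀ i : Fin n, Equiv.Perm.sign (if i = a ∨ i = b then Equiv.swap a b else 1)
      = if i = a ∨ i = b then (-1 : ℤˣ) else 1 := by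
    intro i
    split <;> simp [Equiv.Perm.sign_swap hab]
  rw [Finset.prod_congr rfl fun i _ => h i, ← Finset.prod_filter]
  have hfil : Finset.univ.filter (fun i : Fin n => i = a ∨ i = b) = {a, b} := by
    ext k
    simp [Finset.mem_insert]
  rw [hfil, Finset.prod_pair hab]
  simp

lemma final (a b : Fin n) (hab : a ≠ b) :
    (Subgroup.normalClosure {atilde a b} : Set (W n n)) =
      {w : W n n | w.right = 1 ∧ ∏ i, Equiv.Perm.sign (w.left i) = 1} := by
  classical
  ext w
  simp only [SetLike.mem_coe, Set.mem_setOf_eq]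
  constructor
  · intro hw
    have hle : Subgroup.normalClosure {atilde a b} ≤
        (MonoidHom.prod SemidirectProduct.rightHom (signW n)).ker := by
      apply Subgroup.normalClosure_le_normal
      intro x hx
      rw [Set.mem_singleton_iff] at hx
      subst hx
      rw [SetLike.mem_coe, MonoidHom.mem_ker, Prod.ext_iff]
      exact ⟨by simp [MonoidHom.prod_apply, atilde], by
        simpa [MonoidHom.prod_apply] using signW_atilde a b hab⟩
    have hker := hle hw
    rw [MonoidHom.mem_ker, Prod.ext_iff] at hker
    exact ⟨hker.1, hker.2⟩
  · rintro ⟨h1, h2⟩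
    obtain ⟨fw, gw⟩ := w
    have hgw : gw = 1 := h1
    subst hgw
    exact main_mem a b hab fw h2

end Stmt1Aux

/-- The normal closure in `W = S_n ≀ S_n` of the element `ã = (f, 1)` with
`f = ((0 1), (0 1), e, …, e)` equals `e ≀ Ã_n`. -/


theorem stmt1 (n : ℕ) (hn : 5 ≤ n) :
    (Subgroup.normalClosure
        {(⟨fun i => if i = (⟨0, by omega⟩ : Fin n) ∨ i = (⟨1, by omega⟩ : Fin n)
              then Equiv.swap (⟨0, by omega⟩ : Fin n) (⟨1, by omega⟩ : Fin n)
              else 1, 1⟩ : W n n)} :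
      Set (W n n)) =
    {w : W n n | w.right = 1 ∧ ∏ i, Equiv.Perm.sign (w.left i) = 1} := by
  exact Stmt1Aux.final (⟨0, by omega⟩ : Fin n) (⟨1, by omega⟩ : Fin n)
    (Fin.ne_of_val_ne (by simp))
end

section
/- Let n ≥ 5, let p ≠ q be coordinates in Fin n, and let τ₁, τ₂ be transpositions in S_n. Let b̃ be the element (f, 1) of W = S_n ≀ S_n with f p = τ₁, f q = τ₂ and f i = 1 for all other i. Then the normal closure of b̃ in W equals the subgroup e ≀ Ã_n = {(f, 1) : ∏ i, sign (f i) = 1}. -/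
open Equiv Equiv.Perm SemidirectProduct

@[simp] lemma permHom_apply {n : ℕ} {G : Type*} [Group G] (σ : Equiv.Perm (Fin n))
    (f : Fin n → G) (i : Fin n) : permHom n G σ f i = f (σ⁻¹ i) := rfl

lemma exists_perm_map_pair {α : Type*} [DecidableEq α] {p q i j : α} (hpq : p ≠ q)
    (hij : i ≠ j) : ∃ σ : Equiv.Perm α, σ p = i ∧ σ q = j := by
  refine ⟨Equiv.swap (Equiv.swap p i q) j * Equiv.swap p i, ?_, ?_⟩
  · have h1 : Equiv.swap p i q ≠ i := by
      intro h
      exact hpq (Equiv.injective (Equiv.swap p i) (by simp [h])).symm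
    simp only [Equiv.Perm.mul_apply, Equiv.swap_apply_left]
    exact Equiv.swap_apply_of_ne_of_ne (Ne.symm h1) hij
  · simp only [Equiv.Perm.mul_apply, Equiv.swap_apply_left]

lemma exists_conj_swap {α : Type*} [DecidableEq α] {s t : Equiv.Perm α}
    (hs : s.IsSwap) (ht : t.IsSwap) : ∃ c : Equiv.Perm α, c * s * c⁻¹ = t := by
  obtain ⟨a, b, hab, rfl⟩ := hs
  obtain ⟨x, y, hxy, rfl⟩ := ht
  obtain ⟨σ, h1, h2⟩ := exists_perm_map_pair hab hxy
  exact ⟨σ, by rw [← Equiv.swap_apply_apply, h1, h2]⟩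

variable {n : ℕ}

/-- the distinguished element -/
def bElt (n : ℕ) (p q : Fin n) (τ₁ τ₂ : Equiv.Perm (Fin n)) : W n n :=
  ⟨fun i => if i = p then τ₁ else if i = q then τ₂ else 1, 1⟩

/-- the comap of the normal closure to the base group -/
def Kgrp (n : ℕ) (p q : Fin n) (τ₁ τ₂ : Equiv.Perm (Fin n)) :
    Subgroup (Fin n → Equiv.Perm (Fin n)) :=
  (Subgroup.normalClosure {bElt n p q τ₁ τ₂}).comap SemidirectProduct.inl

section main

variable {p q : Fin n} {τ₁ τ₂ : Equiv.Perm (Fin n)} (hpq : p ≠ q)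
  (h1 : τ₁.IsSwap) (h2 : τ₂.IsSwap)

lemma W_ext (x y : W n n) (hl : x.left = y.left) (hr : x.right = y.right) : x = y := by
  cases x; cases y; cases hl; cases hr; rfl

include hpq h1 h2

lemma gen2_ne (i j : Fin n) (hij : i ≠ j) {s t : Equiv.Perm (Fin n)}
    (hs : s.IsSwap) (ht : t.IsSwap) :
    Pi.mulSingle i s * Pi.mulSingle j t ∈ Kgrp n p q τ₁ τ₂ := by
  obtain ⟨c, hc⟩ := exists_conj_swap h1 hs
  obtain ⟨d, hd⟩ := exists_conj_swap h2 ht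
  obtain ⟨σ, hσp, hσq⟩ := exists_perm_map_pair hpq hij
  set h : Fin n → Equiv.Perm (Fin n) := fun k => if k = i then c else if k = j then d else 1
    with hh
  set g : W n n := ⟨h, σ⟩ with hg
  have key : SemidirectProduct.inl (Pi.mulSingle i s * Pi.mulSingle j t) =
      g * bElt n p q τ₁ τ₂ * g⁻¹ := by
    have hinvi : σ⁻¹ i = p := by rw [← hσp]; simp
    have hinvj : σ⁻¹ j = q := by rw [← hσq]; simp
    refine (W_ext _ _ ?_ ?_).symm
    · funext k
      simp only [SemidirectProduct.mul_left, SemidirectProduct.inv_left,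
        SemidirectProduct.inv_right, SemidirectProduct.mul_right, permHom_apply,
        Pi.mul_apply, Pi.inv_apply, bElt, SemidirectProduct.left_inl]
      simp only [mul_one, (fun e x => e.apply_symm_apply x : ∀ (e : Equiv.Perm (Fin n)) x, e (e⁻¹ x) = x),
        (fun e x => e.symm_apply_apply x : ∀ (e : Equiv.Perm (Fin n)) x, e⁻¹ (e x) = x)]
      rcases eq_or_ne k i with rfl | hki
      · rw [hinvi]
        simp [hg, hσp, hh, Pi.mulSingle_apply, if_neg hij, hc, hpq]
      · rcases eq_or_ne k j with rfl | hkj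
        · rw [hinvj]
          simp [hg, hσq, hh, Pi.mulSingle_apply, if_neg hki, if_neg (Ne.symm hpq), hd, Ne.symm hij]
        · have hkp : σ⁻¹ k ≠ p := fun h => hki (by rw [← hσp, ← h]; simp)
          have hkq : σ⁻¹ k ≠ q := fun h => hkj (by rw [← hσq, ← h]; simp)
          simp [hg, hh, Pi.mulSingle_apply, if_neg hki, if_neg hkj, if_neg hkp, if_neg hkq]
          exact (if_neg hkp).trans (if_neg hkq)
    · simp [SemidirectProduct.mul_right, SemidirectProduct.inv_right, bElt,
        SemidirectProduct.right_inl]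
  have hb : bElt n p q τ₁ τ₂ ∈ Subgroup.normalClosure {bElt n p q τ₁ τ₂} :=
    Subgroup.subset_normalClosure rfl
  have hconj := (Subgroup.normalClosure_normal (s := {bElt n p q τ₁ τ₂})).conj_mem _ hb g
  show SemidirectProduct.inl (Pi.mulSingle i s * Pi.mulSingle j t) ∈
    Subgroup.normalClosure {bElt n p q τ₁ τ₂}
  rw [key]; exact hconj

lemma gen2 (i j : Fin n) {s t : Equiv.Perm (Fin n)} (hs : s.IsSwap) (ht : t.IsSwap) :
    Pi.mulSingle i s * Pi.mulSingle j t ∈ Kgrp n p q τ₁ τ₂ := by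
  rcases eq_or_ne i j with rfl | hij
  · -- pick k ≠ i
    have ⟨k, hk⟩ : ∃ k : Fin n, k ≠ i := by
      rcases eq_or_ne i p with rfl | h
      · exact ⟨q, Ne.symm hpq⟩
      · exact ⟨p, Ne.symm h⟩
    have htt : Pi.mulSingle k t * Pi.mulSingle k t = (1 : Fin n → Equiv.Perm (Fin n)) := by
      obtain ⟨a, b, hab, rfl⟩ := ht
      rw [← Pi.mulSingle_mul, Equiv.swap_mul_self, Pi.mulSingle_one]
    have : (Pi.mulSingle i s * Pi.mulSingle i t : Fin n → Equiv.Perm (Fin n)) =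
        (Pi.mulSingle i s * Pi.mulSingle k t) * (Pi.mulSingle k t * Pi.mulSingle i t) := by
      rw [mul_assoc, ← mul_assoc (Pi.mulSingle k t : Fin n → Equiv.Perm (Fin n)), htt, one_mul]
    rw [this]
    exact mul_mem (gen2_ne hpq h1 h2 i k (Ne.symm hk) hs ht)
      (gen2_ne hpq h1 h2 k i hk ht ht)
  · exact gen2_ne hpq h1 h2 i j hij hs ht

lemma swap_list_mem : ∀ L : List (Equiv.Perm (Fin n)), (∀ g ∈ L, g.IsSwap) → ∀ i : Fin n,
    (Even L.length → Pi.mulSingle i L.prod ∈ Kgrp n p q τ₁ τ₂) ∧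
    (Odd L.length → ∀ (j : Fin n) (t : Equiv.Perm (Fin n)), t.IsSwap →
      Pi.mulSingle j t * Pi.mulSingle i L.prod ∈ Kgrp n p q τ₁ τ₂) := by
  intro L
  induction L with
  | nil =>
    intro _ i
    refine ⟨fun _ => ?_, fun h => absurd h (by simp)⟩
    simp only [List.prod_nil, Pi.mulSingle_one]
    exact one_mem _
  | cons g L ih =>
    intro hswap i
    have hg : g.IsSwap := hswap g (List.mem_cons_self)
    have hL : ∀ x ∈ L, x.IsSwap := fun x hx => hswap x (List.mem_cons_of_mem g hx)
    constructor
    · intro heven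
      have hodd : Odd L.length := by
        rcases Nat.even_or_odd L.length with h | h
        · exfalso
          have : Odd (g :: L).length := by simpa [Nat.odd_add_one] using h
          exact (Nat.not_even_iff_odd.2 this) heven
        · exact h
      have := (ih hL i).2 hodd i g hg
      rw [List.prod_cons, Pi.mulSingle_mul]
      exact this
    · intro hoddc j t htsw
      have heven : Even L.length := by
        rcases Nat.even_or_odd L.length with h | h
        · exact h
        · exfalso
          have : Even (g :: L).length := by
            simpa [Nat.even_add_one, Nat.not_even_iff_odd] using h
          exact (Nat.not_odd_iff_even.2 this) hoddc
      rw [List.prod_cons, Pi.mulSingle_mul, ← mul_assoc]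
      exact mul_mem (gen2 hpq h1 h2 j i htsw hg) ((ih hL i).1 heven)

lemma mem_K_of_sign_prod (f : Fin n → Equiv.Perm (Fin n))
    (hsign : ∏ i, Equiv.Perm.sign (f i) = 1) : f ∈ Kgrp n p q τ₁ τ₂ := by
  suffices H : ∀ s : Finset (Fin n), ∀ f : Fin n → Equiv.Perm (Fin n),
      (∀ i ∉ s, f i = 1) → (∏ i, Equiv.Perm.sign (f i)) = 1 → f ∈ Kgrp n p q τ₁ τ₂ by
    exact H Finset.univ f (fun i hi => absurd (Finset.mem_univ i) hi) hsign
  intro s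
  induction s using Finset.induction_on with
  | empty =>
    intro f hf _
    have : f = 1 := funext fun i => hf i (by simp)
    rw [this]; exact one_mem _
  | @insert a s' ha ih =>
    intro f hf hprod
    obtain ⟨l, hlprod, hlswap⟩ := (Equiv.Perm.truncSwapFactors (f a)).out
    have hsign_fa : Equiv.Perm.sign (f a) = (-1) ^ l.length := by
      rw [← hlprod]; exact Equiv.Perm.sign_prod_list_swap hlswap
    set f' := Function.update f a 1 with hf'
    have hf'a : f' a = 1 := Function.update_self a 1 f
    have hf'ne : ∀ i, i ≠ a → f' i = f i := fun i hi => Function.update_of_ne hi 1 f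
    have hf'supp : ∀ i ∉ s', f' i = 1 := by
      intro i hi
      rcases eq_or_ne i a with rfl | hia
      · exact hf'a
      · rw [hf'ne i hia]
        exact hf i (by simp [Finset.mem_insert, hia, hi])
    have hfactor : f = Pi.mulSingle a (f a) * f' := by
      funext i
      rcases eq_or_ne i a with rfl | hia
      · simp [Pi.mulSingle_apply, hf'a]
      · simp [Pi.mulSingle_apply, hia, hf'ne i hia]
    have hprod_erase : ∏ i ∈ Finset.univ.erase a, Equiv.Perm.sign (f i) =
        (Equiv.Perm.sign (f a))⁻¹ := by
      have h := Finset.mul_prod_erase Finset.univ (fun i => Equiv.Perm.sign (f i))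
        (Finset.mem_univ a)
      rw [hprod] at h
      exact (inv_eq_of_mul_eq_one_right h).symm
    have hprodf' : ∏ i, Equiv.Perm.sign (f' i) = (Equiv.Perm.sign (f a))⁻¹ := by
      rw [← Finset.mul_prod_erase Finset.univ (fun i => Equiv.Perm.sign (f' i))
        (Finset.mem_univ a), hf'a]
      have : ∏ i ∈ Finset.univ.erase a, Equiv.Perm.sign (f' i) =
          ∏ i ∈ Finset.univ.erase a, Equiv.Perm.sign (f i) :=
        Finset.prod_congr rfl fun i hi => by rw [hf'ne i (Finset.ne_of_mem_erase hi)]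
      rw [this, hprod_erase]
      simp
    rcases Int.units_eq_one_or (Equiv.Perm.sign (f a)) with hfa | hfa
    · have hev : Even l.length := by
        rcases Nat.even_or_odd l.length with h | h
        · exact h
        · exfalso
          rw [hfa, Odd.neg_one_pow h] at hsign_fa
          exact absurd hsign_fa (by decide)
      have hm1 : Pi.mulSingle a (f a) ∈ Kgrp n p q τ₁ τ₂ := by
        rw [← hlprod]
        exact (swap_list_mem hpq h1 h2 l hlswap a).1 hev
      have hm2 : f' ∈ Kgrp n p q τ₁ τ₂ := ih f' hf'supp (by rw [hprodf', hfa]; rfl)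
      rw [hfactor]; exact mul_mem hm1 hm2
    · have hodd : Odd l.length := by
        rcases Nat.even_or_odd l.length with h | h
        · exfalso
          rw [hfa, Even.neg_one_pow h] at hsign_fa
          exact absurd hsign_fa (by decide)
        · exact h
      have hs'ne : s'.Nonempty := by
        rw [Finset.nonempty_iff_ne_empty]
        intro he; subst he
        have hone : ∏ i ∈ Finset.univ.erase a, Equiv.Perm.sign (f i) = 1 :=
          Finset.prod_eq_one fun i hi => by
            rw [hf i (by simp [Finset.ne_of_mem_erase hi])]; simp
        rw [hprod_erase, hfa] at hone
        exact absurd hone (by decide)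
      obtain ⟨b, hb⟩ := hs'ne
      have hab : a ≠ b := fun h => ha (h ▸ hb)
      set t := Equiv.swap a b with hts
      have htsw : t.IsSwap := ⟨a, b, hab, rfl⟩
      have htt : (Pi.mulSingle b t : Fin n → Equiv.Perm (Fin n)) * Pi.mulSingle b t = 1 := by
        rw [← Pi.mulSingle_mul, hts, Equiv.swap_mul_self, Pi.mulSingle_one]
      have hX : (Pi.mulSingle a (f a) : Fin n → Equiv.Perm (Fin n)) * Pi.mulSingle b t ∈
          Kgrp n p q τ₁ τ₂ := by
        rw [(Pi.mulSingle_commute (f := fun _ : Fin n => Equiv.Perm (Fin n)) hab (f a) t).eq, ← hlprod]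
        exact (swap_list_mem hpq h1 h2 l hlswap a).2 hodd b t htsw
      have hY : (Pi.mulSingle b t : Fin n → Equiv.Perm (Fin n)) * f' ∈ Kgrp n p q τ₁ τ₂ := by
        apply ih
        · intro i hi
          have hib : i ≠ b := fun h => hi (h ▸ hb)
          simp [Pi.mul_apply, Pi.mulSingle_apply, hib, hf'supp i hi]
        · have hst : ∏ i, Equiv.Perm.sign ((Pi.mulSingle b t : Fin n → Equiv.Perm (Fin n)) i)
              = Equiv.Perm.sign t := by
            simp only [Pi.mulSingle_apply, apply_ite (Equiv.Perm.sign), map_one]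
            simp
          calc ∏ i, Equiv.Perm.sign (((Pi.mulSingle b t : Fin n → Equiv.Perm (Fin n)) * f') i)
              = (∏ i, Equiv.Perm.sign ((Pi.mulSingle b t : Fin n → Equiv.Perm (Fin n)) i)) *
                ∏ i, Equiv.Perm.sign (f' i) := by
                rw [← Finset.prod_mul_distrib]
                exact Finset.prod_congr rfl fun i _ => by simp [Pi.mul_apply]
            _ = 1 := by
                rw [hst, hprodf', hfa, hts, Equiv.Perm.sign_swap hab]; rfl
      have hfin : f = ((Pi.mulSingle a (f a) : Fin n → Equiv.Perm (Fin n)) * Pi.mulSingle b t)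
          * (Pi.mulSingle b t * f') := by
        rw [mul_assoc, ← mul_assoc (Pi.mulSingle b t : Fin n → Equiv.Perm (Fin n)), htt,
          one_mul, ← hfactor]
      rw [hfin]
      exact mul_mem hX hY

end main

/-- product-of-signs homomorphism on the base group -/
def signProdHom (n : ℕ) : (Fin n → Equiv.Perm (Fin n)) →* ℤˣ where
  toFun f := ∏ i, Equiv.Perm.sign (f i)
  map_one' := by simp
  map_mul' f g := by
    show (∏ i, Equiv.Perm.sign ((f * g) i)) = _
    rw [← Finset.prod_mul_distrib]
    exact Finset.prod_congr rfl fun i _ => by simp [Pi.mul_apply]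

/-- the full homomorphism on `W n n` -/
def Φ (n : ℕ) : W n n →* ℤˣ × Equiv.Perm (Fin n) :=
  SemidirectProduct.lift ((signProdHom n).prod 1)
    (MonoidHom.prod 1 (MonoidHom.id _))
    (by
      intro σ
      refine MonoidHom.ext fun f => Prod.ext ?_ ?_
      · have hl : ((((signProdHom n).prod
            (1 : (Fin n → Equiv.Perm (Fin n)) →* Equiv.Perm (Fin n))).comp
            ((permHom n (Equiv.Perm (Fin n)) σ)).toMonoidHom) f).1
            = ∏ i, Equiv.Perm.sign (f (σ⁻¹ i)) := rfl
        rw [hl, Equiv.prod_comp (σ⁻¹ : Equiv.Perm (Fin n)) (fun i => Equiv.Perm.sign (f i))]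
        simp [MulAut.conj, signProdHom]
      · simp [MulAut.conj])

lemma Φ_apply (w : W n n) :
    Φ n w = (∏ i, Equiv.Perm.sign (w.left i), w.right) := by
  rw [← SemidirectProduct.inl_left_mul_inr_right w, map_mul]
  simp only [Φ, SemidirectProduct.lift_inl, SemidirectProduct.lift_inr]
  rw [SemidirectProduct.inl_left_mul_inr_right w]
  show ((signProdHom n w.left, 1) : ℤˣ × Equiv.Perm (Fin n)) * (1, w.right) = _
  simp [signProdHom]


/-- The normal closure in `W = S_n ≀ S_n` of the element `b̃ = (f, 1)` with
`f p = τ₁`, `f q = τ₂` two transpositions and `f i = 1` elsewhere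
equals `e ≀ Ã_n`. -/
theorem stmt2 (n : ℕ) (hn : 5 ≤ n) (p q : Fin n) (hpq : p ≠ q)
    (τ₁ τ₂ : Equiv.Perm (Fin n)) (h1 : τ₁.IsSwap) (h2 : τ₂.IsSwap) :
    (Subgroup.normalClosure
        {(⟨fun i => if i = p then τ₁ else if i = q then τ₂ else 1, 1⟩ : W n n)} :
      Set (W n n)) =
    {w : W n n | w.right = 1 ∧ ∏ i, Equiv.Perm.sign (w.left i) = 1} := by
  have hbe : (⟨fun i => if i = p then τ₁ else if i = q then τ₂ else 1, 1⟩ : W n n) =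
      bElt n p q τ₁ τ₂ := rfl
  ext w
  simp only [Set.mem_setOf_eq, SetLike.mem_coe, hbe]
  constructor
  · intro hw
    have hle : Subgroup.normalClosure {bElt n p q τ₁ τ₂} ≤ (Φ n).ker := by
      apply Subgroup.normalClosure_le_normal
      intro x hx
      rw [Set.mem_singleton_iff] at hx
      subst hx
      rw [SetLike.mem_coe, MonoidHom.mem_ker, Φ_apply]
      have hfb : (bElt n p q τ₁ τ₂).left =
          (Pi.mulSingle p τ₁ : Fin n → Equiv.Perm (Fin n)) * Pi.mulSingle q τ₂ := by
        funext i
        show (if i = p then τ₁ else if i = q then τ₂ else 1) =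
          (Pi.mulSingle p τ₁ * Pi.mulSingle q τ₂ : Fin n → Equiv.Perm (Fin n)) i
        rcases eq_or_ne i p with rfl | hip
        · simp [Pi.mulSingle_apply, if_neg hpq]
        · rcases eq_or_ne i q with rfl | hiq
          · simp [Pi.mulSingle_apply, hip]
          · simp [Pi.mulSingle_apply, hip, hiq]
      have hsingle : ∀ (j : Fin n) (t : Equiv.Perm (Fin n)),
          ∏ i, Equiv.Perm.sign ((Pi.mulSingle j t : Fin n → Equiv.Perm (Fin n)) i) =
            Equiv.Perm.sign t := by
        intro j t
        simp only [Pi.mulSingle_apply, apply_ite (Equiv.Perm.sign), map_one]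
        simp
      have hprod : ∏ i, Equiv.Perm.sign ((bElt n p q τ₁ τ₂).left i) = 1 := by
        rw [hfb]
        have : ∀ i : Fin n, Equiv.Perm.sign
            ((Pi.mulSingle p τ₁ * Pi.mulSingle q τ₂ : Fin n → Equiv.Perm (Fin n)) i) =
            Equiv.Perm.sign ((Pi.mulSingle p τ₁ : Fin n → Equiv.Perm (Fin n)) i) *
            Equiv.Perm.sign ((Pi.mulSingle q τ₂ : Fin n → Equiv.Perm (Fin n)) i) :=
          fun i => by simp [Pi.mul_apply]
        rw [Finset.prod_congr rfl fun i _ => this i, Finset.prod_mul_distrib,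
          hsingle p τ₁, hsingle q τ₂]
        obtain ⟨a, b, hab, rfl⟩ := h1
        obtain ⟨c, d, hcd, rfl⟩ := h2
        rw [Equiv.Perm.sign_swap hab, Equiv.Perm.sign_swap hcd]
        rfl
      have : (bElt n p q τ₁ τ₂).right = 1 := rfl
      rw [hprod, this]
      rfl
    have := hle hw
    rw [MonoidHom.mem_ker, Φ_apply, Prod.mk_eq_one] at this
    exact ⟨this.2, this.1⟩
  · rintro ⟨hr, hp⟩
    have hK : w.left ∈ Kgrp n p q τ₁ τ₂ := mem_K_of_sign_prod hpq h1 h2 w.left hp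
    have hw : w = SemidirectProduct.inl w.left := by
      refine W_ext _ _ rfl ?_
      rw [hr]; rfl
    rw [hw]
    exact hK
end

section
/- Let n ≥ 1 and m ≥ 2. The subgroup T̃_m = {(f, 1) : all f i have the same sign} of W is isomorphic to a semidirect product of the direct power (A_m)^n by the cyclic group of order 2; that is, there exists an action φ of the cyclic group C_2 on the group Fin n → alternatingGroup (Fin m) (a homomorphism from C_2 to its automorphism group) such that T̃_m is isomorphic as a group to the semidirect product (Fin n → alternatingGroup (Fin m)) ⋊_φ C_2. -/
/-- Homomorphism from `C₂` determined by an element squaring to one. -/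
def homOfSq {G : Type*} [Group G] (a : G) (h : a ^ 2 = 1) :
    Multiplicative (ZMod 2) →* G where
  toFun x := a ^ (Multiplicative.toAdd x).val
  map_one' := by
    show a ^ (ZMod.val (0 : ZMod 2)) = 1
    simp
  map_mul' x y := by
    show a ^ (Multiplicative.toAdd x + Multiplicative.toAdd y).val = _
    rw [ZMod.val_add, ← pow_eq_pow_mod _ h, pow_add]

theorem homOfSq_apply {G : Type*} [Group G] (a : G) (h : a ^ 2 = 1)
    (x : Multiplicative (ZMod 2)) :
    homOfSq a h x = a ^ (Multiplicative.toAdd x).val := rfl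

def tau (m : ℕ) (hm : 2 ≤ m) : Equiv.Perm (Fin m) :=
  Equiv.swap ⟨0, by omega⟩ ⟨1, by omega⟩

theorem tau_sq (m : ℕ) (hm : 2 ≤ m) : tau m hm ^ 2 = 1 := by
  rw [sq]; exact Equiv.swap_mul_self _ _

theorem tau_sign (m : ℕ) (hm : 2 ≤ m) : Equiv.Perm.sign (tau m hm) = -1 :=
  Equiv.Perm.sign_swap (by simp [Fin.ext_iff])

/-- conjugation by `tau` on `A_m`. -/
def cA (m : ℕ) (hm : 2 ≤ m) : MulAut (alternatingGroup (Fin m)) :=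
  MulAut.conjNormal (tau m hm)

theorem cA_pow_coe (m : ℕ) (hm : 2 ≤ m) (v : ℕ) (h : alternatingGroup (Fin m)) :
    ((cA m hm ^ v) h : Equiv.Perm (Fin m)) = tau m hm ^ v * h * (tau m hm ^ v)⁻¹ := by
  rw [cA, ← map_pow, MulAut.conjNormal_apply]

/-- componentwise conjugation on `(A_m)^n`. -/
def cP (n m : ℕ) (hm : 2 ≤ m) : MulAut (Fin n → alternatingGroup (Fin m)) where
  toFun a i := cA m hm (a i)
  invFun a i := (cA m hm).symm (a i)
  left_inv a := funext fun i => by simp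
  right_inv a := funext fun i => by simp
  map_mul' a b := funext fun i => by simp

theorem cP_pow_apply (n m : ℕ) (hm : 2 ≤ m) (v : ℕ)
    (a : Fin n → alternatingGroup (Fin m)) (i : Fin n) :
    ((cP n m hm ^ v) a) i = (cA m hm ^ v) (a i) := by
  induction v generalizing a with
  | zero => rfl
  | succ k ih =>
    simp only [pow_succ, MulAut.mul_apply]
    exact ih (cP n m hm a)

theorem cP_sq (n m : ℕ) (hm : 2 ≤ m) : cP n m hm ^ 2 = 1 :=
  MulEquiv.ext fun a => funext fun i => Subtype.ext (by
    rw [cP_pow_apply, cA_pow_coe, tau_sq]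
    simp)

def inclP (n m : ℕ) : (Fin n → alternatingGroup (Fin m)) →* (Fin n → Equiv.Perm (Fin m)) where
  toFun a i := a i
  map_one' := rfl
  map_mul' _ _ := rfl

def tW (n m : ℕ) (hm : 2 ≤ m) : Fin n → Equiv.Perm (Fin m) := fun _ => tau m hm

theorem tW_sq (n m : ℕ) (hm : 2 ≤ m) : tW n m hm ^ 2 = 1 :=
  funext fun _ => tau_sq m hm

def φW (n m : ℕ) (hm : 2 ≤ m) :
    Multiplicative (ZMod 2) →* MulAut (Fin n → alternatingGroup (Fin m)) :=
  homOfSq (cP n m hm) (cP_sq n m hm)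

def f₁ (n m : ℕ) : (Fin n → alternatingGroup (Fin m)) →* W n m :=
  SemidirectProduct.inl.comp (inclP n m)

def f₂ (n m : ℕ) (hm : 2 ≤ m) : Multiplicative (ZMod 2) →* W n m :=
  SemidirectProduct.inl.comp (homOfSq (tW n m hm) (tW_sq n m hm))

theorem compat (n m : ℕ) (hm : 2 ≤ m) : ∀ x, (f₁ n m).comp ((φW n m hm x)).toMonoidHom
    = (MulAut.conj (f₂ n m hm x)).toMonoidHom.comp (f₁ n m) := by
  intro x
  refine MonoidHom.ext fun a => ?_
  show SemidirectProduct.inl (inclP n m (φW n m hm x a)) =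
    MulAut.conj (SemidirectProduct.inl (homOfSq (tW n m hm) (tW_sq n m hm) x))
      (SemidirectProduct.inl (inclP n m a))
  rw [MulAut.conj_apply, ← map_inv, ← map_mul, ← map_mul]
  congr 1
  funext i
  show ((cP n m hm ^ (Multiplicative.toAdd x).val) a i : Equiv.Perm (Fin m)) =
    (tW n m hm ^ (Multiplicative.toAdd x).val) i * (a i : Equiv.Perm (Fin m)) *
      ((tW n m hm ^ (Multiplicative.toAdd x).val)⁻¹) i
  rw [cP_pow_apply, cA_pow_coe]
  rfl

/-- The subgroup `T̃_m` of `W = S_n ≀ S_m` is isomorphic to a semidirect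
product `(A_m)^n ⋊ C_2`. -/
theorem stmt6 (n m : ℕ) (hn : 1 ≤ n) (hm : 2 ≤ m) :
    ∃ H : Subgroup (W n m),
      (H : Set (W n m)) =
        {w : W n m | w.right = 1 ∧
          ((∀ i, Equiv.Perm.sign (w.left i) = 1) ∨
           (∀ i, Equiv.Perm.sign (w.left i) = -1))} ∧
      ∃ φ : Multiplicative (ZMod 2) →* MulAut (Fin n → alternatingGroup (Fin m)),
        Nonempty (H ≃* (Fin n → alternatingGroup (Fin m)) ⋊[φ] Multiplicative (ZMod 2)) := by
  set φ := φW n m hm with hφ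
  set F : (Fin n → alternatingGroup (Fin m)) ⋊[φ] Multiplicative (ZMod 2) →* W n m :=
    SemidirectProduct.lift (f₁ n m) (f₂ n m hm) (compat n m hm) with hFdef
  have key : ∀ (a : Fin n → alternatingGroup (Fin m)) (x : Multiplicative (ZMod 2)),
      F ⟨a, x⟩ = SemidirectProduct.inl
        (fun i => (a i : Equiv.Perm (Fin m)) * tau m hm ^ (Multiplicative.toAdd x).val) := by
    intro a x
    rw [SemidirectProduct.mk_eq_inl_mul_inr, map_mul, SemidirectProduct.lift_inl,
      SemidirectProduct.lift_inr]
    show SemidirectProduct.inl (inclP n m a) *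
      SemidirectProduct.inl (tW n m hm ^ (Multiplicative.toAdd x).val) = _
    rw [← map_mul]
    rfl
  have hinj : Function.Injective F := by
    rw [injective_iff_map_eq_one]
    rintro ⟨a, x⟩ hax
    rw [key] at hax
    have h0 : (fun i => (a i : Equiv.Perm (Fin m)) *
        tau m hm ^ (Multiplicative.toAdd x).val) = 1 :=
      SemidirectProduct.inl_injective (by rw [hax, map_one])
    have hvlt : (Multiplicative.toAdd x).val < 2 := ZMod.val_lt _
    have hi0 := congrFun h0 ⟨0, hn⟩
    have hs := congrArg Equiv.Perm.sign hi0
    simp only [map_mul, map_pow, tau_sign,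
      Equiv.Perm.mem_alternatingGroup.mp (a ⟨0, hn⟩).2, one_mul, Pi.one_apply, map_one] at hs
    have hv : (Multiplicative.toAdd x).val = 0 := by
      rcases (by omega : (Multiplicative.toAdd x).val = 0 ∨ (Multiplicative.toAdd x).val = 1) with h | h
      · exact h
      · rw [h] at hs; simp at hs
    have hx : x = 1 := by
      have : Multiplicative.toAdd x = 0 := (ZMod.val_eq_zero _).mp hv
      simpa using this
    have ha : a = 1 := by
      funext i
      have := congrFun h0 i
      rw [hv, pow_zero, mul_one] at this
      exact Subtype.ext (by simpa using this)
    rw [ha, hx]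
    rfl
  refine ⟨F.range, ?_, φ, ⟨(MulEquiv.ofBijective F.rangeRestrict
    ⟨fun u v h => hinj (congrArg Subtype.val h), F.rangeRestrict_surjective⟩).symm⟩⟩
  ext w
  simp only [SetLike.mem_coe, MonoidHom.mem_range, Set.mem_setOf_eq]
  constructor
  · rintro ⟨⟨a, x⟩, rfl⟩
    rw [key]
    refine ⟨by simp, ?_⟩
    have hvlt : (Multiplicative.toAdd x).val < 2 := ZMod.val_lt _
    have hsgn : ∀ i, Equiv.Perm.sign ((SemidirectProduct.inl
        (fun i => (a i : Equiv.Perm (Fin m)) * tau m hm ^ (Multiplicative.toAdd x).val)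
        : W n m).left i) = (-1) ^ (Multiplicative.toAdd x).val := by
      intro i
      simp [Equiv.Perm.mem_alternatingGroup.mp (a i).2, tau_sign]
    rcases (by omega : (Multiplicative.toAdd x).val = 0 ∨ (Multiplicative.toAdd x).val = 1) with h | h
    · left; intro i; rw [hsgn i, h, pow_zero]
    · right; intro i; rw [hsgn i, h, pow_one]
  · rintro ⟨hr, hs⟩
    have hw' : w = SemidirectProduct.inl w.left := by
      ext <;> simp [hr]
    rcases hs with h1 | h2
    · refine ⟨⟨fun i => ⟨w.left i, Equiv.Perm.mem_alternatingGroup.mpr (h1 i)⟩, 1⟩, ?_⟩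
      rw [key]
      conv_rhs => rw [hw']
      refine congrArg SemidirectProduct.inl (funext fun i => ?_)
      show w.left i * tau m hm ^ (Multiplicative.toAdd (1 : Multiplicative (ZMod 2))).val
        = w.left i
      simp
    · refine ⟨⟨fun i => ⟨w.left i * tau m hm, Equiv.Perm.mem_alternatingGroup.mpr (by
        rw [map_mul, h2 i, tau_sign]; norm_num)⟩, Multiplicative.ofAdd 1⟩, ?_⟩
      rw [key]
      conv_rhs => rw [hw']
      refine congrArg SemidirectProduct.inl (funext fun i => ?_)
      show (w.left i * tau m hm) *
        tau m hm ^ (Multiplicative.toAdd (Multiplicative.ofAdd (1 : ZMod 2))).val = w.left i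
      have : (Multiplicative.toAdd (Multiplicative.ofAdd (1 : ZMod 2))).val = 1 := rfl
      rw [this, pow_one, mul_assoc, ← sq, tau_sq, mul_one]
end
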